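/- (Ideal membership via Gröbner bases, commutative power series case.) Let k be a finite field, R = k[[x_1, …, x_n]], and let ⪯ be an additive total order on ℕⁿ. Let I be a nonzero ideal of R with Gröbner basis G = (g_1, …, g_s), and let f ∈ R be arbitrary. Then f ∈ I if and only if the remainder of f on division by G is zero, i.e. if and only if f can be written as f = q_1 g_1 + ⋯ + q_s g_s with supp(q_i) + LM(g_i) ⊆ Δ_{G,i} for all 1 ≤ i ≤ s. -/

import Mathlib

/-- The support of a multivariate power series: the set of exponents with nonzero
coefficient. -/
def psupp {n : ℕ} {k : Type*} [Semiring k] (f : MvPowerSeries (Fin n) k) :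
    Set (Fin n →₀ ℕ) :=
  {α | MvPowerSeries.coeff α f ≠ 0}

/-- `IsLM le f μ` says that `μ` is the least monomial `LM(f)` of `f` with respect to the
order `le`: `μ` lies in the support of `f` and is `le`-smaller than every element of the
support.  (In particular this forces `f ≠ 0`.) -/
def IsLM {n : ℕ} {k : Type*} [Semiring k] (le : (Fin n →₀ ℕ) → (Fin n →₀ ℕ) → Prop)
    (f : MvPowerSeries (Fin n) k) (μ : Fin n →₀ ℕ) : Prop :=
  μ ∈ psupp f ∧ ∀ ν ∈ psupp f, le μ ν

/-- `le` is an additive total order on `ℕⁿ`: a total order such that `0 ⪯ α` for all `α`,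
and `α ⪯ β` implies `α + γ ⪯ β + γ`.  (Every such order is a well-order.) -/
structure IsAdditiveTotalOrder {n : ℕ} (le : (Fin n →₀ ℕ) → (Fin n →₀ ℕ) → Prop) : Prop where
  total : ∀ α β, le α β ∨ le β α
  antisymm : ∀ α β, le α β → le β α → α = β
  trans : ∀ α β γ, le α β → le β γ → le α γ
  zero_le : ∀ α, le 0 α
  add_right : ∀ α β γ, le α β → le (α + γ) (β + γ)

/-- Membership in `Δ_{F,r} = (LM(f_r) + ℕⁿ) ∖ ⋃_{i<r} Δ_{F,i}`, where `μ i = LM(f_i)`.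
(Unwinding the recursion, `Δ_{F,r} = (μ r + ℕⁿ) ∖ ⋃_{i<r} (μ i + ℕⁿ)`.) -/
def InDelta {n s : ℕ} (μ : Fin s → (Fin n →₀ ℕ)) (r : Fin s) (β : Fin n →₀ ℕ) : Prop :=
  (∃ γ, β = μ r + γ) ∧ ∀ i : Fin s, i < r → ¬ ∃ γ, β = μ i + γ

/-- Membership in `Δ̄_F = ℕⁿ ∖ ⋃_{i=1}^s Δ_{F,i} = ℕⁿ ∖ ⋃_{i=1}^s (μ i + ℕⁿ)`. -/
def InDeltaBar {n s : ℕ} (μ : Fin s → (Fin n →₀ ℕ)) (β : Fin n →₀ ℕ) : Prop :=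
  ∀ i : Fin s, ¬ ∃ γ, β = μ i + γ

/-- `LM(I)`: the set of least monomials of nonzero elements of an ideal `I`. -/
def LMset {n : ℕ} {k : Type*} [Semiring k] (le : (Fin n →₀ ℕ) → (Fin n →₀ ℕ) → Prop)
    (I : Ideal (MvPowerSeries (Fin n) k)) : Set (Fin n →₀ ℕ) :=
  {μ | ∃ f ∈ I, IsLM le f μ}

-- pointwise le implies le
theorem IsAdditiveTotalOrder.le_of_le {n : ℕ} {le : (Fin n →₀ ℕ) → (Fin n →₀ ℕ) → Prop}
    (hle : IsAdditiveTotalOrder le) {a b : Fin n →₀ ℕ} (h : a ≤ b) : le a b := by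
  obtain ⟨c, rfl⟩ := le_iff_exists_add.mp h
  have := hle.add_right 0 c a (hle.zero_le c)
  rwa [zero_add, add_comm c a] at this

theorem IsAdditiveTotalOrder.wf {n : ℕ} {le : (Fin n →₀ ℕ) → (Fin n →₀ ℕ) → Prop}
    (hle : IsAdditiveTotalOrder le) :
    WellFounded (fun a b : Fin n →₀ ℕ => le a b ∧ a ≠ b) := by
  classical
  set lt : (Fin n →₀ ℕ) → (Fin n →₀ ℕ) → Prop := fun a b => le a b ∧ a ≠ b with hltdef
  by_contra hwf
  have hex : ∃ a, ¬ Acc lt a := by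
    by_contra h
    push_neg at h
    exact hwf ⟨h⟩
  obtain ⟨a0, ha0⟩ := hex
  have step : ∀ a, ¬ Acc lt a → ∃ b, ¬ Acc lt b ∧ lt b a := by
    intro a ha
    by_contra h
    push_neg at h
    exact ha (Acc.intro a fun b hb => not_not.mp (fun hnb => (h b hnb hb)))
  choose st hst1 hst2 using step
  let seq : ℕ → {a : Fin n →₀ ℕ // ¬ Acc lt a} := fun m =>
    Nat.rec ⟨a0, ha0⟩ (fun _ p => ⟨st p.1 p.2, hst1 p.1 p.2⟩) m
  have hdesc : ∀ m, lt (seq (m+1)).1 (seq m).1 := fun m => hst2 (seq m).1 (seq m).2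
  have hchain : ∀ m m', m < m' → lt (seq m').1 (seq m).1 := by
    intro m m' hm
    induction m' with
    | zero => omega
    | succ l ih =>
      rcases Nat.lt_succ_iff_lt_or_eq.mp hm with h | h
      · have h1 := ih h
        have h2 := hdesc l
        refine ⟨hle.trans _ _ _ h2.1 h1.1, fun he => ?_⟩
        rw [he] at h2
        exact h1.2 (hle.antisymm _ _ h1.1 h2.1)
      · rw [← h]; exact hdesc m
  obtain ⟨m, m', hmm, hle'⟩ := Set.isPWO_of_wellQuasiOrderedLE (Set.univ : Set (Fin n →₀ ℕ))
    (fun m => ⟨(seq m).1, Set.mem_univ _⟩)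
  have h1 := hchain m m' hmm
  exact h1.2 (hle.antisymm _ _ h1.1 (hle.le_of_le hle'))

open Classical in
/-- Quotient coefficients in the power-series division algorithm, defined by well-founded
recursion along the additive total order.  `Qaux le hwf g μ f β i` is the coefficient of
`q_i` at `β - μ i` when `β ∈ Δ_i`, and `0` otherwise. -/
noncomputable def Qaux {n s : ℕ} {k : Type*} [Field k]
    (le : (Fin n →₀ ℕ) → (Fin n →₀ ℕ) → Prop)
    (hwf : WellFounded (fun a b : Fin n →₀ ℕ => le a b ∧ a ≠ b))
    (g : Fin s → MvPowerSeries (Fin n) k) (μ : Fin s → (Fin n →₀ ℕ))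
    (f : MvPowerSeries (Fin n) k) : (Fin n →₀ ℕ) → Fin s → k :=
  hwf.fix fun β rec i =>
    if InDelta μ i β then
      (MvPowerSeries.coeff β f -
        ∑ p ∈ Finset.HasAntidiagonal.antidiagonal β, ∑ j,
          (if h' : le (p.1 + μ j) β ∧ p.1 + μ j ≠ β then rec (p.1 + μ j) h' j else 0)
            * MvPowerSeries.coeff p.2 (g j)) / MvPowerSeries.coeff (μ i) (g i)
    else 0

open Classical in
theorem Qaux_eq {n s : ℕ} {k : Type*} [Field k]
    (le : (Fin n →₀ ℕ) → (Fin n →₀ ℕ) → Prop)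
    (hwf : WellFounded (fun a b : Fin n →₀ ℕ => le a b ∧ a ≠ b))
    (g : Fin s → MvPowerSeries (Fin n) k) (μ : Fin s → (Fin n →₀ ℕ))
    (f : MvPowerSeries (Fin n) k) (β : Fin n →₀ ℕ) (i : Fin s) :
    Qaux le hwf g μ f β i =
      if InDelta μ i β then
        (MvPowerSeries.coeff β f -
          ∑ p ∈ Finset.HasAntidiagonal.antidiagonal β, ∑ j,
            (if le (p.1 + μ j) β ∧ p.1 + μ j ≠ β then Qaux le hwf g μ f (p.1 + μ j) j else 0)
              * MvPowerSeries.coeff p.2 (g j)) / MvPowerSeries.coeff (μ i) (g i)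
      else 0 := by
  simp only [Qaux]
  rw [WellFounded.fix_eq]
  simp only [dite_eq_ite]

/-- ideal membership via Gröbner bases, commutative power series case.
Let `k` be a finite field, `R = k[[x_1, …, x_n]]`, `⪯` an additive total order on `ℕⁿ`.
Let `I` be a nonzero ideal of `R` with Gröbner basis `G = (g_1, …, g_s)` (nonzero elements of
`I` generating `I` with `LM(I) = ⋃ᵢ (LM(g_i) + ℕⁿ)`), with `μ i = LM(g_i)`.  Then for any
`f ∈ R`, `f ∈ I` if and only if the remainder of `f` on division by `G` is zero, i.e. iff `f`
can be written as `f = q_1 g_1 + ⋯ + q_s g_s` with `supp(q_i) + LM(g_i) ⊆ Δ_{G,i}` for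
all `i`. -/
theorem statement14
    {n s : ℕ} {k : Type*} [Field k] [Finite k]
    (le : (Fin n →₀ ℕ) → (Fin n →₀ ℕ) → Prop) (hle : IsAdditiveTotalOrder le)
    (I : Ideal (MvPowerSeries (Fin n) k)) (hI : I ≠ ⊥)
    (g : Fin s → MvPowerSeries (Fin n) k)
    (hg0 : ∀ i, g i ≠ 0) (hgI : ∀ i, g i ∈ I)
    (hgen : Ideal.span (Set.range g) = I)
    (μ : Fin s → (Fin n →₀ ℕ)) (hμ : ∀ i, IsLM le (g i) (μ i))
    (hGroebner : LMset le I = ⋃ i : Fin s, {β | ∃ γ, β = μ i + γ})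
    (f : MvPowerSeries (Fin n) k) :
    f ∈ I ↔
      ∃ q : Fin s → MvPowerSeries (Fin n) k,
        f = ∑ i, q i * g i ∧ ∀ i, ∀ β ∈ psupp (q i), InDelta μ i (β + μ i) := by
  classical
  have hwf := hle.wf
  have hrefl : ∀ a, le a a := fun a => (hle.total a a).elim id id
  constructor
  · intro hf
    set Q := Qaux le hwf g μ f with hQdef
    have hQ0 : ∀ β i, ¬ InDelta μ i β → Q β i = 0 := by
      intro β i h
      rw [hQdef, Qaux_eq, if_neg h]
    set q : Fin s → MvPowerSeries (Fin n) k := fun i => (fun β => Q (β + μ i) i) with hqdef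
    have hq : ∀ i β, MvPowerSeries.coeff β (q i) = Q (β + μ i) i := fun i β => rfl
    have hdisj : ∀ β i j, InDelta μ i β → InDelta μ j β → i = j := by
      intro β i j hi hj
      by_contra hne
      rcases lt_or_gt_of_ne hne with h | h
      · exact hj.2 i h hi.1
      · exact hi.2 j h hj.1
    have key : ∀ β i, InDelta μ i β →
        MvPowerSeries.coeff β (∑ j, q j * g j) = MvPowerSeries.coeff β f := by
      intro β i hβ
      obtain ⟨γ, hγ⟩ := hβ.1
      have hpiv : ((γ, μ i) : (Fin n →₀ ℕ) × (Fin n →₀ ℕ)) ∈ Finset.HasAntidiagonal.antidiagonal β := by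
        rw [Finset.HasAntidiagonal.mem_antidiagonal, hγ, add_comm]
      have hsum : MvPowerSeries.coeff β (∑ j, q j * g j)
          = ∑ p ∈ Finset.HasAntidiagonal.antidiagonal β, ∑ j,
              Q (p.1 + μ j) j * MvPowerSeries.coeff p.2 (g j) := by
        rw [map_sum]
        simp only [MvPowerSeries.coeff_mul]
        rw [Finset.sum_comm]
        simp only [hq]
      have hterm : ∀ p ∈ Finset.HasAntidiagonal.antidiagonal β, ∀ j : Fin s,
          Q (p.1 + μ j) j * MvPowerSeries.coeff p.2 (g j)
            = (if le (p.1 + μ j) β ∧ p.1 + μ j ≠ β then Q (p.1 + μ j) j else 0)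
                * MvPowerSeries.coeff p.2 (g j)
              + (if p = (γ, μ i) then
                  (if j = i then Q β i * MvPowerSeries.coeff (μ i) (g i) else 0) else 0) := by
        intro p hp j
        rw [Finset.HasAntidiagonal.mem_antidiagonal] at hp
        by_cases h' : le (p.1 + μ j) β ∧ p.1 + μ j ≠ β
        · rw [if_pos h']
          have hz : (if p = (γ, μ i) then
              (if j = i then Q β i * MvPowerSeries.coeff (μ i) (g i) else 0) else 0) = 0 := by
            by_cases h1 : p = (γ, μ i)
            · by_cases h2 : j = i
              · exfalso
                apply h'.2
                rw [h1, h2, hγ]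
                exact add_comm γ (μ i)
              · rw [if_pos h1, if_neg h2]
            · rw [if_neg h1]
          rw [hz, add_zero]
        · rw [if_neg h', zero_mul, zero_add]
          by_cases h'' : p.1 + μ j = β
          · have hp2 : p.2 = μ j := by
              have h2 : p.1 + p.2 = p.1 + μ j := by rw [hp, h'']
              exact add_left_cancel h2
            by_cases hji : j = i
            · subst hji
              have hp1 : p.1 = γ := by
                have h3 : p.1 + μ j = γ + μ j := by rw [h'', hγ, add_comm]
                exact add_right_cancel h3
              have hpe : p = (γ, μ j) := Prod.ext hp1 hp2
              rw [if_pos hpe, if_pos rfl, h'', hp2]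
            · have hnj : ¬ InDelta μ j β := fun hj => hji (hdisj β j i hj hβ)
              rw [h'', hQ0 β j hnj, zero_mul]
              have hz : (if p = (γ, μ i) then
                  (if j = i then Q β i * MvPowerSeries.coeff (μ i) (g i) else 0) else 0) = 0 := by
                by_cases h1 : p = (γ, μ i)
                · rw [if_pos h1, if_neg hji]
                · rw [if_neg h1]
              rw [hz]
          · have hnle : ¬ le (p.1 + μ j) β := fun hl => h' ⟨hl, h''⟩
            have hg0' : MvPowerSeries.coeff p.2 (g j) = 0 := by
              by_contra hne0
              apply hnle
              have h4 : le (μ j) p.2 := (hμ j).2 p.2 hne0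
              have h5 : le (μ j + p.1) (p.2 + p.1) := hle.add_right _ _ _ h4
              rw [add_comm p.1 (μ j), ← hp, add_comm p.1 p.2]
              exact h5
            rw [hg0', mul_zero]
            have hz : (if p = (γ, μ i) then
                (if j = i then Q β i * MvPowerSeries.coeff (μ i) (g i) else 0) else 0) = 0 := by
              by_cases h1 : p = (γ, μ i)
              · by_cases h2 : j = i
                · exfalso
                  apply h''
                  rw [h1, h2, hγ]
                  exact add_comm γ (μ i)
                · rw [if_pos h1, if_neg h2]
              · rw [if_neg h1]
            rw [hz]
      rw [hsum,
        Finset.sum_congr rfl (fun p hp => Finset.sum_congr rfl (fun j _ => hterm p hp j))]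
      simp only [Finset.sum_add_distrib]
      have hind : (∑ p ∈ Finset.HasAntidiagonal.antidiagonal β, ∑ j : Fin s,
          (if p = (γ, μ i) then
            (if j = i then Q β i * MvPowerSeries.coeff (μ i) (g i) else 0) else 0))
          = Q β i * MvPowerSeries.coeff (μ i) (g i) := by
        rw [Finset.sum_eq_single ((γ, μ i) : (Fin n →₀ ℕ) × (Fin n →₀ ℕ))]
        · simp
        · intro b _ hne
          simp [hne]
        · intro habs
          exact absurd hpiv habs
      rw [hind]
      have hQβ : Q β i * MvPowerSeries.coeff (μ i) (g i)
          = MvPowerSeries.coeff β f - ∑ p ∈ Finset.HasAntidiagonal.antidiagonal β, ∑ j,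
              (if le (p.1 + μ j) β ∧ p.1 + μ j ≠ β then Q (p.1 + μ j) j else 0)
                * MvPowerSeries.coeff p.2 (g j) := by
        rw [hQdef, Qaux_eq, if_pos hβ, div_mul_cancel₀]
        exact (hμ i).1
      rw [hQβ]
      ring
    set r := f - ∑ j, q j * g j with hrdef
    have hrI : r ∈ I := I.sub_mem hf (I.sum_mem fun j _ => I.mul_mem_left _ (hgI j))
    have hrsupp : ∀ β, ¬ InDeltaBar μ β → MvPowerSeries.coeff β r = 0 := by
      intro β hβ
      unfold InDeltaBar at hβ
      push_neg at hβ
      obtain ⟨i, hi⟩ := hβ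
      have hne : (Finset.univ.filter (fun i : Fin s => ∃ γ, β = μ i + γ)).Nonempty :=
        ⟨i, Finset.mem_filter.mpr ⟨Finset.mem_univ i, hi⟩⟩
      obtain ⟨j, hjmem, hjmin⟩ := Finset.exists_min_image _ id hne
      rw [Finset.mem_filter] at hjmem
      have hjd : InDelta μ j β := ⟨hjmem.2, fun i' hlt hex =>
        absurd (hjmin i' (Finset.mem_filter.mpr ⟨Finset.mem_univ i', hex⟩)) (not_le.mpr hlt)⟩
      rw [hrdef, map_sub, key β j hjd, sub_self]
    have hr0 : r = 0 := by
      by_contra hne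
      have hsupp_ne : (psupp r).Nonempty := by
        by_contra h
        rw [Set.not_nonempty_iff_eq_empty] at h
        apply hne
        ext β
        by_contra hc
        have : β ∈ psupp r := hc
        rw [h] at this
        exact this
      set m := hwf.min (psupp r) hsupp_ne with hm
      have hmmem : m ∈ psupp r := hwf.min_mem (psupp r) hsupp_ne
      have hmin : ∀ ν ∈ psupp r, le m ν := by
        intro ν hν
        rcases hle.total m ν with h | h
        · exact h
        · by_cases hh : ν = m
          · rw [hh]; exact hrefl m
          · exact absurd ⟨h, hh⟩ (hwf.not_lt_min (psupp r) hν)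
      have hLM : m ∈ LMset le I := ⟨r, hrI, hmmem, hmin⟩
      rw [hGroebner, Set.mem_iUnion] at hLM
      obtain ⟨i, γ, hγ⟩ := hLM
      exact hmmem (hrsupp m (fun h => h i ⟨γ, hγ⟩))
    refine ⟨q, ?_, ?_⟩
    · rw [hrdef] at hr0
      exact sub_eq_zero.mp hr0
    · intro i β hβ
      by_contra h
      exact hβ (by rw [hq]; exact hQ0 (β + μ i) i h)
  · rintro ⟨q, rfl, -⟩
    exact I.sum_mem fun i _ => I.mul_mem_left _ (hgI i)
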